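/- If D is an uncountable set of ordinals all lying in lim(C_{θ'}) for a fixed θ' with coherent club sequence (C_α), then any two elements α < β of D satisfy α ∈ lim(C_β); consequently any function f : D → ω must take the same value on two <_T-comparable elements (pigeonhole), so no specializing function on D exists. -/
import Mathlib


open Set

/-- `β` is a limit point of the set of ordinals `C`. -/
def IsLimPt (C : Set Ordinal) (β : Ordinal) : Prop :=
  0 < β ∧ sSup (C ∩ Iio β) = β

/-- if D is an uncountable set of ordinals all lying in
lim(C_{θ'}), then any two elements α < β of D satisfy α ∈ lim(C_β), and any
f : D → ω takes the same value on two <_T-comparable elements; hence no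
specializing function on D exists. -/
theorem stmt6 (θ' : Ordinal) (Γ : Set Ordinal) (C : Ordinal → Set Ordinal)
    (hθ' : θ' ∈ Γ)
    (hCsub : ∀ α ∈ Γ, C α ⊆ Iio α)
    (hcoh : ∀ α ∈ Γ, ∀ β, β < α → IsLimPt (C α) β →
      β ∈ Γ ∧ C β = C α ∩ Iio β)
    (D : Set Ordinal)
    (hDlim : ∀ α ∈ D, α < θ' ∧ IsLimPt (C θ') α)
    (hunc : ¬ D.Countable) :
    (∀ α ∈ D, ∀ β ∈ D, α < β → IsLimPt (C β) α) ∧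
    (∀ f : Ordinal → ℕ, ∃ α ∈ D, ∃ β ∈ D, α < β ∧ IsLimPt (C β) α ∧ f α = f β) ∧
    ¬ ∃ f : Ordinal → ℕ,
        ∀ α ∈ D, ∀ β ∈ D, α < β → IsLimPt (C β) α → f α ≠ f β := by
  have h1 : ∀ α ∈ D, ∀ β ∈ D, α < β → IsLimPt (C β) α := by
    intro α hα β hβ hab
    obtain ⟨hβθ, hβlim⟩ := hDlim β hβ
    obtain ⟨hαθ, hα0, hαsup⟩ := hDlim α hα
    obtain ⟨hβΓ, hCβ⟩ := hcoh θ' hθ' β hβθ hβlim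
    refine ⟨hα0, ?_⟩
    have : C β ∩ Iio α = C θ' ∩ Iio α := by
      rw [hCβ]
      ext x
      simp only [mem_inter_iff, mem_Iio]
      constructor
      · rintro ⟨⟨h1, _⟩, h2⟩; exact ⟨h1, h2⟩
      · rintro ⟨h1, h2⟩; exact ⟨⟨h1, h2.trans hab⟩, h2⟩
    rw [this, hαsup]
  refine ⟨h1, ?_, ?_⟩
  · intro f
    have : ¬ ∀ n : ℕ, (D ∩ f ⁻¹' {n}).Countable := by
      intro hall
      apply hunc
      have : D ⊆ ⋃ n : ℕ, D ∩ f ⁻¹' {n} := by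
        intro x hx
        exact mem_iUnion.2 ⟨f x, hx, rfl⟩
      exact (Set.countable_iUnion hall).mono this
    push_neg at this
    obtain ⟨n, hn⟩ := this
    have : ¬ (D ∩ f ⁻¹' {n}).Subsingleton := fun h => hn h.countable
    rw [Set.not_subsingleton_iff] at this
    obtain ⟨α, hα, β, hβ, hne⟩ := this
    rcases hne.lt_or_gt with hlt | hlt
    · exact ⟨α, hα.1, β, hβ.1, hlt, h1 α hα.1 β hβ.1 hlt, by
        rw [hα.2, hβ.2]⟩
    · exact ⟨β, hβ.1, α, hα.1, hlt, h1 β hβ.1 α hα.1 hlt, by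
        rw [hα.2, hβ.2]⟩
  · rintro ⟨f, hf⟩
    have : ¬ ∀ n : ℕ, (D ∩ f ⁻¹' {n}).Countable := by
      intro hall
      apply hunc
      have : D ⊆ ⋃ n : ℕ, D ∩ f ⁻¹' {n} := by
        intro x hx
        exact mem_iUnion.2 ⟨f x, hx, rfl⟩
      exact (Set.countable_iUnion hall).mono this
    push_neg at this
    obtain ⟨n, hn⟩ := this
    have : ¬ (D ∩ f ⁻¹' {n}).Subsingleton := fun h => hn h.countable
    rw [Set.not_subsingleton_iff] at this
    obtain ⟨α, hα, β, hβ, hne⟩ := this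
    rcases hne.lt_or_gt with hlt | hlt
    · exact hf α hα.1 β hβ.1 hlt (h1 α hα.1 β hβ.1 hlt) (by rw [hα.2, hβ.2])
    · exact hf β hβ.1 α hα.1 hlt (h1 β hβ.1 α hα.1 hlt) (by rw [hα.2, hβ.2])
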